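/- arXiv:1901.07053 — 2 statements merged into one kernel-verified Lean document; each statement's English description precedes it below -/
import Mathlib

section
/- For any symmetric positive definite matrices A, B of size n, any vector q in R^n, and any μ ∈ [0,1], one has ⟨q, (μA + (1-μ)B)⁻¹ q⟩ ≤ μ⟨q, A⁻¹ q⟩ + (1-μ)⟨q, B⁻¹ q⟩. -/
open Matrix

noncomputable def lamMax {n : ℕ} (X : Matrix (Fin n) (Fin n) ℝ) : ℝ :=
  sSup (spectrum ℝ X)

noncomputable def lamMin {n : ℕ} (X : Matrix (Fin n) (Fin n) ℝ) : ℝ :=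
  sInf (spectrum ℝ X)

noncomputable def Dp {n : ℕ} (p : ℝ) (X : Matrix (Fin n) (Fin n) ℝ) : ℝ :=
  X.trace + (p - 2) * lamMax X

lemma pd_symm_aux {n : ℕ} {A : Matrix (Fin n) (Fin n) ℝ} (hA : A.IsHermitian) :
    Aᵀ = A := by
  rw [← conjTranspose_eq_transpose_of_trivial]; exact hA

lemma dot_symm_aux {n : ℕ} {A : Matrix (Fin n) (Fin n) ℝ} (hA : Aᵀ = A)
    (u v : Fin n → ℝ) : u ⬝ᵥ A.mulVec v = v ⬝ᵥ A.mulVec u := by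
  rw [dotProduct_mulVec, ← mulVec_transpose, hA, dotProduct_comm]

lemma key_aux {n : ℕ} (q x : Fin n → ℝ) (A : Matrix (Fin n) (Fin n) ℝ)
    (hA : A.PosDef) :
    2 * (q ⬝ᵥ x) - x ⬝ᵥ A.mulVec x ≤ q ⬝ᵥ (A⁻¹).mulVec q := by
  have hdet : IsUnit A.det := isUnit_iff_ne_zero.mpr hA.det_pos.ne'
  set w : Fin n → ℝ := (A⁻¹).mulVec q with hw
  have hAw : A.mulVec w = q := by
    rw [hw, mulVec_mulVec, Matrix.mul_nonsing_inv A hdet, one_mulVec]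
  have h0 : 0 ≤ (x - w) ⬝ᵥ A.mulVec (x - w) := by
    have := hA.posSemidef.dotProduct_mulVec_nonneg (x - w); simpa using this
  have hsym := dot_symm_aux (pd_symm_aux hA.isHermitian)
  have hsyminv := dot_symm_aux (pd_symm_aux hA.inv.isHermitian)
  have h1 : w ⬝ᵥ A.mulVec x = q ⬝ᵥ x := by
    rw [hsym w x, hAw, dotProduct_comm]
  have h2 : x ⬝ᵥ A.mulVec w = q ⬝ᵥ x := by rw [hsym x w, h1]
  have h3 : w ⬝ᵥ A.mulVec w = q ⬝ᵥ (A⁻¹).mulVec q := by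
    conv_lhs => rw [hAw]
    rw [hw, dotProduct_comm]
  have hexp : (x - w) ⬝ᵥ A.mulVec (x - w)
      = x ⬝ᵥ A.mulVec x - 2 * (q ⬝ᵥ x) + q ⬝ᵥ (A⁻¹).mulVec q := by
    rw [sub_dotProduct, mulVec_sub, dotProduct_sub, dotProduct_sub, h1, h2, h3]
    ring
  rw [hexp] at h0
  linarith

theorem stmt0 {n : ℕ} (q : Fin n → ℝ) (A B : Matrix (Fin n) (Fin n) ℝ)
    (hA : A.PosDef) (hB : B.PosDef) (μ : ℝ) (hμ0 : 0 ≤ μ) (hμ1 : μ ≤ 1) :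
    q ⬝ᵥ ((μ • A + (1 - μ) • B)⁻¹).mulVec q ≤
      μ * (q ⬝ᵥ (A⁻¹).mulVec q) + (1 - μ) * (q ⬝ᵥ (B⁻¹).mulVec q) := by
  set M : Matrix (Fin n) (Fin n) ℝ := μ • A + (1 - μ) • B with hM
  have hMpd : M.PosDef := by
    refine PosDef.of_dotProduct_mulVec_pos ?_ ?_
    · show Mᴴ = M
      rw [conjTranspose_eq_transpose_of_trivial, hM, transpose_add, transpose_smul,
        transpose_smul, pd_symm_aux hA.isHermitian, pd_symm_aux hB.isHermitian]
    · intro y hy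
      have hAy := hA.dotProduct_mulVec_pos hy
      have hBy := hB.dotProduct_mulVec_pos hy
      simp only [star_trivial] at hAy hBy ⊢
      have hq : y ⬝ᵥ M.mulVec y = μ * (y ⬝ᵥ A.mulVec y) + (1 - μ) * (y ⬝ᵥ B.mulVec y) := by
        simp [hM, add_mulVec, smul_mulVec, dotProduct_add, dotProduct_smul, smul_eq_mul]
      rw [hq]
      rcases eq_or_lt_of_le hμ0 with h0 | h0
      · rw [← h0]; simpa using hBy
      rcases eq_or_lt_of_le hμ1 with h1 | h1
      · rw [h1]; simpa using hAy
      · exact add_pos (mul_pos h0 hAy) (mul_pos (by linarith) hBy)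
  have hdetM : IsUnit M.det := isUnit_iff_ne_zero.mpr hMpd.det_pos.ne'
  set x : Fin n → ℝ := (M⁻¹).mulVec q with hx
  have hMx : M.mulVec x = q := by
    rw [hx, mulVec_mulVec, Matrix.mul_nonsing_inv M hdetM, one_mulVec]
  have hLHS : q ⬝ᵥ (M⁻¹).mulVec q = 2 * (q ⬝ᵥ x) - x ⬝ᵥ M.mulVec x := by
    rw [hMx, ← hx, dotProduct_comm x q]; ring
  have hsplit : x ⬝ᵥ M.mulVec x = μ * (x ⬝ᵥ A.mulVec x) + (1 - μ) * (x ⬝ᵥ B.mulVec x) := by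
    simp [hM, add_mulVec, smul_mulVec, dotProduct_add, dotProduct_smul, smul_eq_mul]
  have h1 : μ * (2 * (q ⬝ᵥ x) - x ⬝ᵥ A.mulVec x) ≤ μ * (q ⬝ᵥ (A⁻¹).mulVec q) :=
    mul_le_mul_of_nonneg_left (key_aux q x A hA) hμ0
  have h2 : (1 - μ) * (2 * (q ⬝ᵥ x) - x ⬝ᵥ B.mulVec x) ≤ (1 - μ) * (q ⬝ᵥ (B⁻¹).mulVec q) :=
    mul_le_mul_of_nonneg_left (key_aux q x B hB) (by linarith)
  rw [hLHS, hsplit]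
  nlinarith [h1, h2]
end

section
/- Let p ≥ 2, D_p(X) = tr(X) + (p-2)λ_max(X). Let X₁, ..., X_k be symmetric positive definite n×n matrices and ν₁, ..., ν_k ∈ [0,1] with Σνᵢ = 1. Then 1 / D_p((Σᵢ νᵢ Xᵢ)⁻¹) ≥ Σᵢ νᵢ / D_p(Xᵢ⁻¹). -/
open Matrix

section Helpers

variable {n : ℕ} {A M : Matrix (Fin n) (Fin n) ℝ}


lemma lamMax_eq_sSup_range (hA : A.IsHermitian) :
    lamMax A = sSup (Set.range hA.eigenvalues) := by
  rw [lamMax, hA.spectrum_real_eq_range_eigenvalues]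

lemma eigenvalues_le_lamMax (hA : A.IsHermitian) (i : Fin n) :
    hA.eigenvalues i ≤ lamMax A := by
  rw [lamMax_eq_sSup_range hA]
  exact le_csSup (Set.finite_range _).bddAbove ⟨i, rfl⟩

lemma exists_lamMax_eigen (hn : 0 < n) (hA : A.IsHermitian) :
    ∃ j, hA.eigenvalues j = lamMax A := by
  have : Nonempty (Fin n) := ⟨⟨0, hn⟩⟩
  rw [lamMax_eq_sSup_range hA]
  exact (Set.Nonempty.csSup_mem (Set.range_nonempty _) (Set.finite_range _))

lemma exists_eigvec_lamMax (hn : 0 < n) (hA : A.IsHermitian) :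
    ∃ v : Fin n → ℝ, 0 < v ⬝ᵥ v ∧ A *ᵥ v = lamMax A • v := by
  obtain ⟨j, hj⟩ := exists_lamMax_eigen hn hA
  refine ⟨⇑(hA.eigenvectorBasis j), ?_, by rw [hA.mulVec_eigenvectorBasis, hj]⟩
  have hne : ⇑(hA.eigenvectorBasis j) ≠ 0 := by
    have := hA.eigenvectorBasis.orthonormal.ne_zero j
    intro h
    apply this
    ext i
    exact congrFun h i
  obtain ⟨i, hi⟩ := Function.ne_iff.mp hne
  refine Finset.sum_pos' (fun i _ => mul_self_nonneg _) ⟨i, Finset.mem_univ i, ?_⟩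
  exact mul_self_pos.mpr hi

lemma dot_mulVec_left (M : Matrix (Fin n) (Fin n) ℝ) (x y : Fin n → ℝ) :
    (Mᵀ *ᵥ x) ⬝ᵥ y = x ⬝ᵥ (M *ᵥ y) := by
  rw [mulVec_transpose, ← dotProduct_mulVec]

lemma rayleigh_le (hA : A.IsHermitian) (v : Fin n → ℝ) :
    v ⬝ᵥ A *ᵥ v ≤ lamMax A * (v ⬝ᵥ v) := by
  rcases Nat.eq_zero_or_pos n with h0 | hn
  · subst h0; simp [dotProduct]
  set U : Matrix (Fin n) (Fin n) ℝ := (hA.eigenvectorUnitary : Matrix (Fin n) (Fin n) ℝ) with hUdef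
  have hsU : star U = Uᵀ := by
    rw [Matrix.star_eq_conjTranspose, Matrix.conjTranspose_eq_transpose_of_trivial]
  have hU : U * Uᵀ = 1 := by
    have := (Matrix.mem_unitaryGroup_iff).mp (hA.eigenvectorUnitary).2
    rwa [hsU] at this
  have hA' : A = U * diagonal hA.eigenvalues * Uᵀ := by
    have := hA.spectral_theorem
    rwa [Unitary.conjStarAlgAut_apply, ← hUdef, hsU, RCLike.ofReal_real_eq_id, Function.id_comp] at this
  set w : Fin n → ℝ := Uᵀ *ᵥ v with hw
  have h1 : v ⬝ᵥ A *ᵥ v = w ⬝ᵥ (diagonal hA.eigenvalues) *ᵥ w := by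
    conv_lhs => rw [hA']
    rw [← mulVec_mulVec, ← mulVec_mulVec, ← dot_mulVec_left U v, hw]
  have h2 : w ⬝ᵥ w = v ⬝ᵥ v := by
    rw [hw, dot_mulVec_left, mulVec_mulVec, hU, one_mulVec]
  rw [h1, ← h2]
  simp only [dotProduct, mulVec_diagonal]
  rw [Finset.mul_sum]
  refine Finset.sum_le_sum fun i _ => ?_
  have := eigenvalues_le_lamMax hA i
  nlinarith [mul_self_nonneg (w i)]


lemma posdef_q (hM : M.PosDef) {x : Fin n → ℝ} (hx : x ≠ 0) : 0 < x ⬝ᵥ M *ᵥ x := by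
  simpa using hM.dotProduct_mulVec_pos hx

lemma possemidef_q (hM : M.PosSemidef) (x : Fin n → ℝ) : 0 ≤ x ⬝ᵥ M *ᵥ x := by
  simpa using hM.dotProduct_mulVec_nonneg x

lemma lamMax_pos (hn : 0 < n) (hA : A.PosDef) : 0 < lamMax A := by
  obtain ⟨v, hv, hev⟩ := exists_eigvec_lamMax hn hA.1
  have hvne : v ≠ 0 := by rintro rfl; simp [dotProduct] at hv
  have h := posdef_q hA hvne
  rw [hev, dotProduct_smul, smul_eq_mul] at h
  rcases mul_pos_iff.mp h with ⟨h1, _⟩ | ⟨_, h2⟩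
  · exact h1
  · linarith

lemma lamMax_smul_pos (hn : 0 < n) (hA : A.IsHermitian) {c : ℝ} (hc : 0 < c) :
    lamMax (c • A) = c * lamMax A := by
  have hcA : (c • A).IsHermitian := by
    unfold Matrix.IsHermitian
    rw [conjTranspose_smul, hA.eq, star_trivial]
  apply le_antisymm
  · obtain ⟨v, hv, hev⟩ := exists_eigvec_lamMax hn hcA
    have h1 : lamMax (c • A) * (v ⬝ᵥ v) = v ⬝ᵥ (c • A) *ᵥ v := by
      rw [hev, dotProduct_smul, smul_eq_mul]
    have h2 : v ⬝ᵥ (c • A) *ᵥ v = c * (v ⬝ᵥ A *ᵥ v) := by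
      rw [smul_mulVec, dotProduct_smul, smul_eq_mul]
    have h3 := rayleigh_le hA v
    have := mul_le_mul_of_nonneg_left h3 hc.le
    rw [← h2, ← h1] at this
    rw [← mul_assoc] at this
    exact le_of_mul_le_mul_right this hv
  · obtain ⟨v, hv, hev⟩ := exists_eigvec_lamMax hn hA
    have h1 : c * lamMax A * (v ⬝ᵥ v) = v ⬝ᵥ (c • A) *ᵥ v := by
      rw [smul_mulVec, hev, dotProduct_smul, dotProduct_smul]
      simp [mul_assoc]
    have h2 := rayleigh_le hcA v
    rw [← h1] at h2
    exact le_of_mul_le_mul_right h2 hv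

lemma trace_eq_sum_q (A : Matrix (Fin n) (Fin n) ℝ) :
    A.trace = ∑ j, (Pi.single j 1) ⬝ᵥ A *ᵥ (Pi.single j 1) := by
  rw [trace]
  congr 1
  ext j
  rw [mulVec_single, single_dotProduct]
  simp [diag]

lemma trace_inv_pos (hn : 0 < n) (hA : A.PosDef) : 0 < A⁻¹.trace := by
  have hinv : A⁻¹.PosDef := hA.inv
  rw [trace_eq_sum_q]
  have : Nonempty (Fin n) := ⟨⟨0, hn⟩⟩
  refine Finset.sum_pos (fun j _ => posdef_q hinv ?_) Finset.univ_nonempty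
  intro h
  have := congrFun h j
  simp [Pi.single_eq_same] at this

lemma Dp_inv_pos {p : ℝ} (hn : 0 < n) (hp : 2 ≤ p) (hA : A.PosDef) : 0 < Dp p A⁻¹ := by
  have h1 := trace_inv_pos hn hA
  have h2 := lamMax_pos hn hA.inv
  have : 0 ≤ (p - 2) * lamMax A⁻¹ := mul_nonneg (by linarith) h2.le
  unfold Dp; linarith

lemma Dp_inv_smul {p : ℝ} (hn : 0 < n) (hA : A.PosDef) {c : ℝ} (hc : 0 < c) :
    Dp p (c • A)⁻¹ = c⁻¹ * Dp p A⁻¹ := by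
  have hdet : IsUnit A.det := isUnit_iff_ne_zero.mpr hA.det_pos.ne'
  have hinv : (c • A)⁻¹ = c⁻¹ • A⁻¹ := by
    apply Matrix.inv_eq_left_inv
    rw [Matrix.smul_mul, Matrix.mul_smul, smul_smul, inv_mul_cancel₀ hc.ne', one_smul,
      Matrix.nonsing_inv_mul _ hdet]
  rw [hinv]
  unfold Dp
  rw [trace_smul, lamMax_smul_pos hn hA.inv.1 (inv_pos.mpr hc), smul_eq_mul]
  ring

lemma q_inv_ge (hY : M.PosDef) (v w : Fin n → ℝ) :
    2 * (v ⬝ᵥ w) - w ⬝ᵥ M *ᵥ w ≤ v ⬝ᵥ M⁻¹ *ᵥ v := by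
  have hdet : IsUnit M.det := isUnit_iff_ne_zero.mpr hY.det_pos.ne'
  set a : Fin n → ℝ := M⁻¹ *ᵥ v with ha
  have hMa : M *ᵥ a = v := by
    rw [ha, mulVec_mulVec, Matrix.mul_nonsing_inv _ hdet, one_mulVec]
  have hMt : Mᵀ = M := by
    rw [← Matrix.conjTranspose_eq_transpose_of_trivial, hY.1.eq]
  have h0 : 0 ≤ (a - w) ⬝ᵥ M *ᵥ (a - w) := possemidef_q hY.posSemidef _
  have hexp : (a - w) ⬝ᵥ M *ᵥ (a - w)
      = v ⬝ᵥ M⁻¹ *ᵥ v - 2 * (v ⬝ᵥ w) + w ⬝ᵥ M *ᵥ w := by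
    have e1 : a ⬝ᵥ M *ᵥ w = v ⬝ᵥ w := by
      rw [← dot_mulVec_left M a w, hMt, hMa]
    have e2 : w ⬝ᵥ M *ᵥ a = w ⬝ᵥ v := by rw [hMa]
    have e3 : a ⬝ᵥ M *ᵥ a = v ⬝ᵥ M⁻¹ *ᵥ v := by
      rw [hMa, dotProduct_comm, ha]
    rw [mulVec_sub, dotProduct_sub, sub_dotProduct, sub_dotProduct, e1, e2, e3,
      dotProduct_comm w v]
    ring
  linarith

end Helpers

variable {n k : ℕ}

lemma q_sum {ι : Type*} (s : Finset ι) (M : ι → Matrix (Fin n) (Fin n) ℝ) (μ : ι → ℝ)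
    (x : Fin n → ℝ) :
    x ⬝ᵥ (∑ i ∈ s, μ i • M i) *ᵥ x = ∑ i ∈ s, μ i * (x ⬝ᵥ M i *ᵥ x) := by
  induction s using Finset.cons_induction with
  | empty => simp
  | cons i s hi ih =>
      simp [Matrix.add_mulVec, dotProduct_add, ih, smul_mulVec, dotProduct_smul]

lemma sum_posDef (t : Finset (Fin k)) (μ : Fin k → ℝ) (Y : Fin k → Matrix (Fin n) (Fin n) ℝ)
    (hY : ∀ i ∈ t, (Y i).PosDef) (hμ : ∀ i ∈ t, 0 ≤ μ i)
    (i₀ : Fin k) (hi₀ : i₀ ∈ t) (hμ₀ : 0 < μ i₀) :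
    (∑ i ∈ t, μ i • Y i).PosDef := by
  refine posDef_iff_dotProduct_mulVec.mpr ⟨?_, ?_⟩
  · unfold Matrix.IsHermitian
    rw [conjTranspose_sum]
    refine Finset.sum_congr rfl fun i hi => ?_
    rw [conjTranspose_smul, (hY i hi).1.eq, star_trivial]
  · intro x hx
    have hq : x ⬝ᵥ (∑ i ∈ t, μ i • Y i) *ᵥ x = ∑ i ∈ t, μ i * (x ⬝ᵥ Y i *ᵥ x) :=
      q_sum t Y μ x
    have : (0:ℝ) < ∑ i ∈ t, μ i * (x ⬝ᵥ Y i *ᵥ x) := by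
      refine Finset.sum_pos' (fun i hi => mul_nonneg (hμ i hi)
        (possemidef_q (hY i hi).posSemidef x)) ⟨i₀, hi₀, ?_⟩
      exact mul_pos hμ₀ (posdef_q (hY i₀ hi₀) hx)
    simpa [hq] using this

lemma key_convex (t : Finset (Fin k)) (μ : Fin k → ℝ) (Y : Fin k → Matrix (Fin n) (Fin n) ℝ)
    (hY : ∀ i ∈ t, (Y i).PosDef) (hμ : ∀ i ∈ t, 0 ≤ μ i) (hμs : ∑ i ∈ t, μ i = 1)
    (hS : (∑ i ∈ t, μ i • Y i).PosDef) (v : Fin n → ℝ) :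
    v ⬝ᵥ (∑ i ∈ t, μ i • Y i)⁻¹ *ᵥ v ≤ ∑ i ∈ t, μ i * (v ⬝ᵥ (Y i)⁻¹ *ᵥ v) := by
  set S := ∑ i ∈ t, μ i • Y i with hSdef
  set w : Fin n → ℝ := S⁻¹ *ᵥ v with hw
  have hdet : IsUnit S.det := isUnit_iff_ne_zero.mpr hS.det_pos.ne'
  have hSw : S *ᵥ w = v := by
    rw [hw, mulVec_mulVec, Matrix.mul_nonsing_inv _ hdet, one_mulVec]
  have hL : v ⬝ᵥ S⁻¹ *ᵥ v = 2 * (v ⬝ᵥ w) - w ⬝ᵥ S *ᵥ w := by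
    rw [hSw, ← hw, dotProduct_comm w v]
    ring
  have hws : w ⬝ᵥ S *ᵥ w = ∑ i ∈ t, μ i * (w ⬝ᵥ Y i *ᵥ w) := q_sum t Y μ w
  have hL2 : ∑ i ∈ t, μ i * (2 * (v ⬝ᵥ w) - w ⬝ᵥ Y i *ᵥ w)
      = 2 * (v ⬝ᵥ w) - w ⬝ᵥ S *ᵥ w := by
    simp only [mul_sub]
    rw [Finset.sum_sub_distrib, ← Finset.sum_mul, hμs, one_mul, hws]
  calc v ⬝ᵥ S⁻¹ *ᵥ v = 2 * (v ⬝ᵥ w) - w ⬝ᵥ S *ᵥ w := hL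
    _ = ∑ i ∈ t, μ i * (2 * (v ⬝ᵥ w) - w ⬝ᵥ Y i *ᵥ w) := hL2.symm
    _ ≤ ∑ i ∈ t, μ i * (v ⬝ᵥ (Y i)⁻¹ *ᵥ v) :=
        Finset.sum_le_sum fun i hi =>
          mul_le_mul_of_nonneg_left (q_inv_ge (hY i hi) v w) (hμ i hi)

lemma posDef_smul {A : Matrix (Fin n) (Fin n) ℝ} (hA : A.PosDef) {c : ℝ} (hc : 0 < c) :
    (c • A).PosDef := by
  refine posDef_iff_dotProduct_mulVec.mpr ⟨?_, ?_⟩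
  · unfold Matrix.IsHermitian
    rw [conjTranspose_smul, hA.1.eq, star_trivial]
  · intro x hx
    have h := hA.dotProduct_mulVec_pos hx
    simp only [smul_mulVec, dotProduct_smul, smul_eq_mul]
    exact mul_pos hc h

lemma Dp_convex {p : ℝ} (hn : 0 < n) (hp : 2 ≤ p)
    (t : Finset (Fin k)) (μ : Fin k → ℝ) (Y : Fin k → Matrix (Fin n) (Fin n) ℝ)
    (hY : ∀ i ∈ t, (Y i).PosDef) (hμ : ∀ i ∈ t, 0 ≤ μ i) (hμs : ∑ i ∈ t, μ i = 1)
    (hS : (∑ i ∈ t, μ i • Y i).PosDef) :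
    Dp p (∑ i ∈ t, μ i • Y i)⁻¹ ≤ ∑ i ∈ t, μ i * Dp p (Y i)⁻¹ := by
  set S := ∑ i ∈ t, μ i • Y i with hSdef
  have htr : S⁻¹.trace ≤ ∑ i ∈ t, μ i * (Y i)⁻¹.trace := by
    rw [trace_eq_sum_q S⁻¹]
    have h1 : ∀ j : Fin n, (Pi.single j 1) ⬝ᵥ S⁻¹ *ᵥ (Pi.single j 1)
        ≤ ∑ i ∈ t, μ i * ((Pi.single j 1) ⬝ᵥ (Y i)⁻¹ *ᵥ (Pi.single j 1)) :=
      fun j => key_convex t μ Y hY hμ hμs hS _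
    calc ∑ j, (Pi.single j 1) ⬝ᵥ S⁻¹ *ᵥ (Pi.single j 1)
        ≤ ∑ j, ∑ i ∈ t, μ i * ((Pi.single j 1) ⬝ᵥ (Y i)⁻¹ *ᵥ (Pi.single j 1)) :=
          Finset.sum_le_sum fun j _ => h1 j
      _ = ∑ i ∈ t, μ i * (Y i)⁻¹.trace := by
          rw [Finset.sum_comm]
          refine Finset.sum_congr rfl fun i _ => ?_
          rw [trace_eq_sum_q, Finset.mul_sum]
  have hlm : lamMax S⁻¹ ≤ ∑ i ∈ t, μ i * lamMax (Y i)⁻¹ := by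
    obtain ⟨v, hv, hev⟩ := exists_eigvec_lamMax hn hS.inv.1
    have h1 : lamMax S⁻¹ * (v ⬝ᵥ v) = v ⬝ᵥ S⁻¹ *ᵥ v := by
      rw [hev, dotProduct_smul, smul_eq_mul]
    have h2 : v ⬝ᵥ S⁻¹ *ᵥ v ≤ ∑ i ∈ t, μ i * (v ⬝ᵥ (Y i)⁻¹ *ᵥ v) :=
      key_convex t μ Y hY hμ hμs hS v
    have h3 : ∑ i ∈ t, μ i * (v ⬝ᵥ (Y i)⁻¹ *ᵥ v)
        ≤ (∑ i ∈ t, μ i * lamMax (Y i)⁻¹) * (v ⬝ᵥ v) := by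
      rw [Finset.sum_mul]
      refine Finset.sum_le_sum fun i hi => ?_
      rw [mul_assoc]
      exact mul_le_mul_of_nonneg_left (rayleigh_le (hY i hi).inv.1 v) (hμ i hi)
    have := (h1.symm ▸ h2).trans h3
    exact le_of_mul_le_mul_right this hv
  have hsum : ∑ i ∈ t, μ i * Dp p (Y i)⁻¹
      = (∑ i ∈ t, μ i * (Y i)⁻¹.trace) + (p - 2) * ∑ i ∈ t, μ i * lamMax (Y i)⁻¹ := by
    rw [Finset.mul_sum, ← Finset.sum_add_distrib]
    refine Finset.sum_congr rfl fun i _ => ?_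
    unfold Dp; ring
  have hpm : 0 ≤ p - 2 := by linarith
  rw [hsum]
  unfold Dp
  have := mul_le_mul_of_nonneg_left hlm hpm
  linarith

theorem stmt4 {n k : ℕ} (p : ℝ) (hp : 2 ≤ p)
    (X : Fin k → Matrix (Fin n) (Fin n) ℝ) (ν : Fin k → ℝ)
    (hX : ∀ i, (X i).PosDef) (hν0 : ∀ i, 0 ≤ ν i) (hν1 : ∀ i, ν i ≤ 1)
    (hsum : ∑ i, ν i = 1) :
    ∑ i, ν i / Dp p (X i)⁻¹ ≤ 1 / Dp p (∑ i, ν i • X i)⁻¹ := by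
  rcases Nat.eq_zero_or_pos n with h0 | hn
  · subst h0
    have hzero : ∀ B : Matrix (Fin 0) (Fin 0) ℝ, Dp p B = 0 := by
      intro B
      have hsub : Subsingleton (Matrix (Fin 0) (Fin 0) ℝ) :=
        ⟨fun a b => by ext i; exact i.elim0⟩
      have hspec : spectrum ℝ B = ∅ := by
        ext x
        simp only [Set.mem_empty_iff_false, iff_false, spectrum.mem_iff, not_not]
        exact @isUnit_of_subsingleton _ _ hsub _
      simp [Dp, lamMax, hspec, Matrix.trace, Real.sSup_empty]
    simp [hzero]
  · set t : Finset (Fin k) := Finset.univ.filter (fun i => 0 < ν i) with ht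
    have hg : ∀ i, 0 < Dp p (X i)⁻¹ := fun i => Dp_inv_pos hn hp (hX i)
    set g : Fin k → ℝ := fun i => Dp p (X i)⁻¹ with hgdef
    have hsum_t : ∑ i ∈ t, ν i = 1 := by
      rw [ht, Finset.sum_filter_of_ne fun i _ h => (hν0 i).lt_of_ne (Ne.symm h), hsum]
    have ht_ne : t.Nonempty := by
      by_contra h
      rw [Finset.not_nonempty_iff_eq_empty] at h
      rw [h, Finset.sum_empty] at hsum_t
      norm_num at hsum_t
    have hS_eq : ∑ i, ν i • X i = ∑ i ∈ t, ν i • X i := by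
      rw [ht, Finset.sum_filter_of_ne]
      intro i _ h
      rcases (hν0 i).lt_or_eq with h' | h'
      · exact h'
      · exact absurd (by rw [← h', zero_smul]) h
    set T : ℝ := ∑ i ∈ t, ν i / g i with hT
    have hνpos : ∀ i ∈ t, 0 < ν i := fun i hi => (Finset.mem_filter.mp hi).2
    have hTpos : 0 < T := by
      refine Finset.sum_pos (fun i hi => div_pos (hνpos i hi) (hg i)) ht_ne
    set μ : Fin k → ℝ := fun i => ν i / (g i * T) with hμdef
    set Y : Fin k → Matrix (Fin n) (Fin n) ℝ := fun i => (g i * T) • X i with hYdef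
    have hgT : ∀ i, 0 < g i * T := fun i => mul_pos (hg i) hTpos
    have hμY : ∀ i ∈ t, μ i • Y i = ν i • X i := by
      intro i hi
      rw [hμdef, hYdef]
      simp only [smul_smul]
      rw [div_mul_cancel₀ _ (hgT i).ne']
    have hYpd : ∀ i ∈ t, (Y i).PosDef := by
      intro i hi
      rw [hYdef]
      exact posDef_smul (hX i) (hgT i)
    have hμ0 : ∀ i ∈ t, 0 ≤ μ i := fun i hi =>
      div_nonneg (hν0 i) (hgT i).le
    have hμs : ∑ i ∈ t, μ i = 1 := by
      have : ∀ i ∈ t, μ i = (ν i / g i) / T := by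
        intro i hi; rw [hμdef, div_div]
      rw [Finset.sum_congr rfl this, ← Finset.sum_div, ← hT, div_self hTpos.ne']
    have hSY : ∑ i ∈ t, μ i • Y i = ∑ i, ν i • X i := by
      rw [Finset.sum_congr rfl hμY, hS_eq]
    obtain ⟨i₀, hi₀⟩ := ht_ne
    have hSpd : (∑ i, ν i • X i).PosDef := by
      rw [hS_eq]
      exact sum_posDef t ν X (fun i _ => hX i) (fun i hi => (hνpos i hi).le) i₀ hi₀
        (hνpos i₀ hi₀)
    have hSpd' : (∑ i ∈ t, μ i • Y i).PosDef := by rw [hSY]; exact hSpd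
    have hDpY : ∀ i ∈ t, Dp p (Y i)⁻¹ = T⁻¹ := by
      intro i hi
      rw [hYdef, Dp_inv_smul hn (hX i) (hgT i)]
      show (g i * T)⁻¹ * g i = T⁻¹
      field_simp
      exact div_self (hg i).ne'
    have hconv := Dp_convex hn hp t μ Y hYpd hμ0 hμs hSpd'
    rw [hSY] at hconv
    have hμDp : ∑ i ∈ t, μ i * Dp p (Y i)⁻¹ = T⁻¹ := by
      rw [Finset.sum_congr rfl (fun i hi => by rw [hDpY i hi]), ← Finset.sum_mul, hμs, one_mul]
    rw [hμDp] at hconv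
    have hDpS : 0 < Dp p (∑ i, ν i • X i)⁻¹ := Dp_inv_pos hn hp hSpd
    have hTsum : ∑ i, ν i / g i = T := by
      rw [hT, ht, Finset.sum_filter_of_ne]
      intro i _ h
      rcases (hν0 i).lt_or_eq with h' | h'
      · exact h'
      · exact absurd (by rw [← h', zero_div]) h
    rw [show (∑ i, ν i / Dp p (X i)⁻¹) = T from hTsum]
    rw [le_div_iff₀ hDpS]
    have := mul_le_mul_of_nonneg_left hconv hTpos.le
    rw [mul_inv_cancel₀ hTpos.ne'] at this
    linarith
end
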